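/- (Univariate SCAD penalized least-squares lemma.) Let c₀ > 0, λ > 0, a > 2, and β* ∈ ℝ with |β*| > (a + 1/(2c₀))λ. Then β* is the unique global minimizer over β ∈ ℝ of g(β) = (c₀/2)(β − β*)² + p_λ(|β|); that is, g(β) > g(β*) = p_λ(aλ) for every β ≠ β*. -/
import Mathlib

noncomputable section

def scadDeriv (l a u : ℝ) : ℝ :=
  l * ((if u ≤ l then 1 else 0) + max (a * l - u) 0 / ((a - 1) * l) * (if l < u then 1 else 0))

def scad (l a t : ℝ) : ℝ := ∫ u in (0:ℝ)..t, scadDeriv l a u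

lemma scadDeriv_nonneg {l a : ℝ} (hl : 0 < l) (ha : 2 < a) (u : ℝ) : 0 ≤ scadDeriv l a u := by
  unfold scadDeriv
  have h1 : (0:ℝ) < (a - 1) * l := by nlinarith
  positivity

lemma scadDeriv_le {l a : ℝ} (hl : 0 < l) (ha : 2 < a) (u : ℝ) : scadDeriv l a u ≤ l := by
  unfold scadDeriv
  have h1 : (0:ℝ) < (a - 1) * l := by nlinarith
  by_cases h : u ≤ l
  · rw [if_pos h, if_neg (not_lt.2 h)]
    ring_nf; nlinarith
  · rw [if_neg h, if_pos (not_le.1 h)]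
    have hmax : max (a * l - u) 0 ≤ (a - 1) * l := by
      apply max_le
      · nlinarith [not_le.1 h]
      · nlinarith
    have : max (a * l - u) 0 / ((a - 1) * l) ≤ 1 := by
      rw [div_le_one h1]; exact hmax
    nlinarith [le_max_right (a * l - u) 0]

lemma scadDeriv_eq_zero {l a : ℝ} (hl : 0 < l) (ha : 2 < a) {u : ℝ} (hu : a * l ≤ u) :
    scadDeriv l a u = 0 := by
  have hlu : l < u := by nlinarith
  unfold scadDeriv
  rw [if_neg (not_le.2 hlu), if_pos hlu, max_eq_right (by linarith)]
  simp

lemma measurable_scadDeriv (l a : ℝ) : Measurable (scadDeriv l a) := by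
  have h1 : Measurable fun u : ℝ => (if u ≤ l then (1:ℝ) else 0) :=
    Measurable.ite (measurableSet_le measurable_id measurable_const)
      measurable_const measurable_const
  have h2 : Measurable fun u : ℝ => (if l < u then (1:ℝ) else 0) :=
    Measurable.ite (measurableSet_lt measurable_const measurable_id)
      measurable_const measurable_const
  have h3 : Measurable fun u : ℝ => max (a * l - u) 0 / ((a - 1) * l) :=
    ((measurable_const.sub measurable_id).max measurable_const).div_const _
  exact measurable_const.mul (h1.add (h3.mul h2))

lemma scadDeriv_intervalIntegrable {l a : ℝ} (hl : 0 < l) (ha : 2 < a) (x y : ℝ) :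
    IntervalIntegrable (scadDeriv l a) MeasureTheory.volume x y := by
  rw [intervalIntegrable_iff]
  apply MeasureTheory.Measure.integrableOn_of_bounded (M := l)
  · exact (measure_Ioc_lt_top).ne
  · exact (measurable_scadDeriv l a).aestronglyMeasurable
  · filter_upwards with u
    rw [Real.norm_eq_abs, abs_le]
    exact ⟨by linarith [scadDeriv_nonneg hl ha u, hl], scadDeriv_le hl ha u⟩

lemma scad_eq_of_ge {l a : ℝ} (hl : 0 < l) (ha : 2 < a) {t : ℝ} (ht : a * l ≤ t) :
    scad l a t = scad l a (a * l) := by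
  unfold scad
  rw [← intervalIntegral.integral_add_adjacent_intervals
      (scadDeriv_intervalIntegrable hl ha 0 (a*l)) (scadDeriv_intervalIntegrable hl ha (a*l) t)]
  have : (∫ u in (a*l)..t, scadDeriv l a u) = 0 := by
    rw [intervalIntegral.integral_congr (g := fun _ => (0:ℝ))]
    · simp
    · intro u hu
      rw [Set.uIcc_of_le ht] at hu
      exact scadDeriv_eq_zero hl ha hu.1
  rw [this, add_zero]

lemma scad_diff_le {l a : ℝ} (hl : 0 < l) (ha : 2 < a) {t : ℝ} (ht : t ≤ a * l) :
    scad l a (a * l) - scad l a t ≤ l * (a * l - t) := by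
  unfold scad
  rw [← intervalIntegral.integral_add_adjacent_intervals
      (scadDeriv_intervalIntegrable hl ha 0 t) (scadDeriv_intervalIntegrable hl ha t (a*l))]
  have hle : (∫ u in t..(a*l), scadDeriv l a u) ≤ ∫ u in t..(a*l), l := by
    apply intervalIntegral.integral_mono_on ht (scadDeriv_intervalIntegrable hl ha t (a*l))
      intervalIntegrable_const
    intro u _
    exact scadDeriv_le hl ha u
  simp only [intervalIntegral.integral_const, smul_eq_mul] at hle
  nlinarith

/-- univariate SCAD penalized least-squares lemma. -/
theorem scad_univariate_pls
    (c₀ l a : ℝ) (hc₀ : 0 < c₀) (hl : 0 < l) (ha : 2 < a)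
    (βstar : ℝ) (hβstar : (a + 1 / (2 * c₀)) * l < |βstar|) :
    (∀ β : ℝ, β ≠ βstar →
      c₀ / 2 * (βstar - βstar) ^ 2 + scad l a |βstar| < c₀ / 2 * (β - βstar) ^ 2 + scad l a |β|) ∧
    c₀ / 2 * (βstar - βstar) ^ 2 + scad l a |βstar| = scad l a (a * l) := by
  have hc₀' : (0:ℝ) < 1 / (2 * c₀) := by positivity
  have hstar_ge : a * l ≤ |βstar| := by nlinarith
  have hstar : scad l a |βstar| = scad l a (a * l) := scad_eq_of_ge hl ha hstar_ge
  constructor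
  · intro β hβ
    rw [hstar]
    have hsq : 0 < (β - βstar) ^ 2 := by
      have : β - βstar ≠ 0 := sub_ne_zero.2 hβ
      positivity
    by_cases hb : a * l ≤ |β|
    · rw [scad_eq_of_ge hl ha hb]
      nlinarith
    · push_neg at hb
      have hdiff := scad_diff_le hl ha hb.le
      obtain ⟨d, hd⟩ : ∃ d, d = a * l - |β| := ⟨_, rfl⟩
      rw [← hd] at hdiff
      have hd0 : 0 < d := by rw [hd]; linarith
      have habs : |βstar| - |β| ≤ |β - βstar| := by
        have := abs_sub_abs_le_abs_sub βstar β
        rw [abs_sub_comm] at this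
        linarith
      have hgt : d + l / (2 * c₀) < |β - βstar| := by
        have : l / (2 * c₀) = 1 / (2 * c₀) * l := by ring
        nlinarith [hd]
      have hpos : 0 < d + l / (2 * c₀) := by positivity
      have hsq2 : (d + l / (2 * c₀)) ^ 2 < (β - βstar) ^ 2 := by
        have h2 : |β - βstar| ^ 2 = (β - βstar) ^ 2 := sq_abs _
        nlinarith [abs_nonneg (β - βstar)]
      have key : l * d < c₀ / 2 * (β - βstar) ^ 2 := by
        have expand : c₀ / 2 * (d + l / (2 * c₀)) ^ 2 - l * d = (2 * c₀ * d - l) ^ 2 / (8 * c₀) := by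
          field_simp
          ring
        have hnn : (0:ℝ) ≤ (2 * c₀ * d - l) ^ 2 / (8 * c₀) := by positivity
        have hmul : c₀ / 2 * (d + l / (2 * c₀)) ^ 2 < c₀ / 2 * (β - βstar) ^ 2 := by
          apply mul_lt_mul_of_pos_left hsq2 (by positivity)
        linarith
      have hz : c₀ / 2 * (βstar - βstar) ^ 2 = 0 := by ring
      rw [hz, zero_add]
      linarith
  · rw [hstar]; ring_nf

end
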